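/- Let H be any group and let W = (ℤ → H) ⋊ ℤ be the (cartesian, i.e., unrestricted) wreath product of H by ℤ, the semidirect product of the full direct product of copies of H indexed by ℤ with ℤ acting by shifting coordinates. Then the copy of H in the base group consisting of functions ℤ → H supported at 0 is contained in the derived subgroup W′ of W, and this copy is a subnormal subgroup of W of defect at most 2 (it is normal in the base group, which is normal in W). -/

import Mathlib

/-- The shift automorphism of the full cartesian power `ℤ → H` by `n : ℤ`:
`(shiftEquiv H n f) i = f (i - n)`. -/
def shiftEquiv (H : Type*) [Group H] (n : ℤ) : (ℤ → H) ≃* (ℤ → H) where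
  toFun f i := f (i - n)
  invFun f i := f (i + n)
  left_inv f := funext fun i => by simp
  right_inv f := funext fun i => by simp
  map_mul' f g := rfl

/-- The shift action of `ℤ` (written multiplicatively) on `ℤ → H`. -/
def shiftHom (H : Type*) [Group H] : Multiplicative ℤ →* MulAut (ℤ → H) where
  toFun n := shiftEquiv H (Multiplicative.toAdd n)
  map_one' := by
    ext f i
    simp [shiftEquiv]
  map_mul' m n := by
    ext f i
    simp [shiftEquiv, sub_add_eq_sub_sub]

/-- The (cartesian, unrestricted) wreath product `H Wr ℤ = (ℤ → H) ⋊ ℤ`,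
with `ℤ` acting by shifting coordinates. -/
abbrev CartesianWreathZ (H : Type*) [Group H] :=
  (ℤ → H) ⋊[shiftHom H] Multiplicative ℤ

/-- The base group `ℤ → H` viewed inside the wreath product. -/
def baseSubgroup (H : Type*) [Group H] : Subgroup (CartesianWreathZ H) :=
  (SemidirectProduct.inl : (ℤ → H) →* CartesianWreathZ H).range

/-- The copy of `H` inside the wreath product consisting of functions `ℤ → H`
supported at `0`. -/
def copyAtZero (H : Type*) [Group H] : Subgroup (CartesianWreathZ H) :=
  (Subgroup.pi Set.univ (fun i : ℤ => if i = 0 then (⊤ : Subgroup H) else ⊥)).map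
    (SemidirectProduct.inl : (ℤ → H) →* CartesianWreathZ H)

theorem copyAtZero_le_commutator_and_subnormal_of_defect_two
    (H : Type*) [Group H] :
    copyAtZero H ≤ commutator (CartesianWreathZ H) ∧
    copyAtZero H ≤ baseSubgroup H ∧
    ((copyAtZero H).subgroupOf (baseSubgroup H)).Normal ∧
    (baseSubgroup H).Normal := by
  refine ⟨?_, ?_, ?_, ?_⟩
  · rintro x ⟨g, hg, rfl⟩
    have hg0 : ∀ i : ℤ, i ≠ 0 → g i = 1 := by
      intro i hi
      have := hg i (Set.mem_univ i)
      simpa [hi, Subgroup.mem_bot] using this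
    set f : ℤ → H := fun i => if 0 ≤ i then g 0 else 1 with hf
    open scoped commutatorElement in
    have key : (SemidirectProduct.inl g : CartesianWreathZ H) =
        ⁅(SemidirectProduct.inl f : CartesianWreathZ H),
          SemidirectProduct.inr (Multiplicative.ofAdd (1 : ℤ))⁆ := by
      rw [commutatorElement_def]
      have h1 : (SemidirectProduct.inl f : CartesianWreathZ H) *
          SemidirectProduct.inr (Multiplicative.ofAdd (1 : ℤ)) *
          (SemidirectProduct.inl f)⁻¹ *
          (SemidirectProduct.inr (Multiplicative.ofAdd (1 : ℤ)))⁻¹ =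
          SemidirectProduct.inl (f * (shiftHom H (Multiplicative.ofAdd (1:ℤ)) f⁻¹)) := by
        rw [map_mul, ← map_inv, SemidirectProduct.inl_aut]
        simp [map_inv, mul_assoc]
      rw [h1]
      congr 1
      funext i
      simp only [Pi.mul_apply, shiftHom, shiftEquiv, MonoidHom.coe_mk, OneHom.coe_mk,
        MulEquiv.coe_mk, Equiv.coe_fn_mk, Pi.inv_apply, toAdd_ofAdd, hf]
      rcases lt_trichotomy i 0 with h | h | h
      · rw [if_neg (by omega), if_neg (by omega), hg0 i (by omega)]
        simp
      · subst h
        rw [if_pos le_rfl, if_neg (by omega)]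
        simp
      · rw [if_pos (by omega), if_pos (by omega), hg0 i (by omega)]
        simp
    rw [key]
    exact Subgroup.commutator_mem_commutator (Subgroup.mem_top _) (Subgroup.mem_top _)
  · rintro x ⟨g, _, rfl⟩
    exact ⟨g, rfl⟩
  · constructor
    rintro ⟨n, hn⟩ hmem ⟨x, xf, rfl⟩
    simp only [Subgroup.mem_subgroupOf] at hmem ⊢
    obtain ⟨g, hg, hgn⟩ := hmem
    refine ⟨xf * g * xf⁻¹, ?_, ?_⟩
    · intro i _
      have hg0 : ∀ j : ℤ, j ≠ 0 → g j = 1 := by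
        intro j hj
        have := hg j (Set.mem_univ j)
        simpa [hj, Subgroup.mem_bot] using this
      by_cases hi : i = 0
      · simp [hi]
      · simp [if_neg hi, hg0 i hi]
    · simp only [Subgroup.coe_subtype, Subgroup.coe_mul, Subgroup.coe_inv]
      rw [map_mul, map_mul, map_inv, hgn]
  · rw [baseSubgroup, SemidirectProduct.range_inl_eq_ker_rightHom]
    exact MonoidHom.normal_ker _
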